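/- Suppose a real-valued function D in the normal cone of the polytope 𝒴 = {p ≥ 0 : ∑_x p(x,z) = P_Z(z), p(x,z) ≤ 2^{-k}P_Z(z)} at a flat point P_{Y₀,Z} satisfies ⟨D, P_{X,Z}⟩ - ⟨D, P_{Y₀,Z}⟩ ≥ ε with D taking values in [0,1]. Then there exists a threshold t ∈ [0,1] such that the boolean function D'(x,z) = 1[D(x,z) > t] is also in the normal cone and satisfies ⟨D', P_{X,Z}⟩ - ⟨D', P_{Y₀,Z}⟩ ≥ ε. -/

import Mathlib

open Finset

open MeasureTheory

private lemma indInt19 (c : ℝ) :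
    IntervalIntegrable (fun t => if t < c then (1:ℝ) else 0) volume 0 1 := by
  have h : (fun t => if t < c then (1:ℝ) else 0) = (Set.Iio c).indicator (fun _ => 1) := by
    ext t; simp [Set.indicator, Set.mem_Iio]
  rw [h, intervalIntegrable_iff]
  exact (integrableOn_const measure_Ioc_lt_top.ne).indicator measurableSet_Iio

private lemma indIntegral19 (c : ℝ) (h0 : 0 ≤ c) (h1 : c ≤ 1) :
    ∫ t in (0:ℝ)..1, (if t < c then (1:ℝ) else 0) = c := by
  have h : (fun t => if t < c then (1:ℝ) else 0) = (Set.Iio c).indicator (fun _ => 1) := by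
    ext t; simp [Set.indicator, Set.mem_Iio]
  rw [h, intervalIntegral.integral_of_le zero_le_one,
    MeasureTheory.integral_indicator measurableSet_Iio, setIntegral_const, measureReal_def,
    Measure.restrict_apply measurableSet_Iio]
  have h2 : Set.Iio c ∩ Set.Ioc 0 1 = Set.Ioo 0 c := by
    ext x; simp only [Set.mem_inter_iff, Set.mem_Iio, Set.mem_Ioc, Set.mem_Ioo]
    constructor
    · rintro ⟨h, h', h''⟩; exact ⟨h', h⟩
    · rintro ⟨h, h'⟩; exact ⟨h', h, le_trans (le_of_lt h') h1⟩
  rw [h2, Real.volume_Ioo]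
  simp [h0]

theorem stmt19' {α β : Type*} [Fintype α] [Fintype β] (k ε : ℝ)
    (PZ : β → ℝ)
    (p₀ : α → β → ℝ)
    (PXZ : α → β → ℝ)
    (D : α → β → ℝ) (hD01 : ∀ x z, D x z ∈ Set.Icc (0 : ℝ) 1)
    (hcone : ∀ z, 0 < PZ z → ∀ x₁ x₂,
      p₀ x₁ z = (2 : ℝ) ^ (-k) * PZ z → p₀ x₂ z = 0 → D x₂ z ≤ D x₁ z)
    (hadv : ∑ x, ∑ z, D x z * PXZ x z - ∑ x, ∑ z, D x z * p₀ x z ≥ ε) :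
    ∃ t ∈ Set.Icc (0 : ℝ) 1,
      (∀ z, 0 < PZ z → ∀ x₁ x₂,
        p₀ x₁ z = (2 : ℝ) ^ (-k) * PZ z → p₀ x₂ z = 0 →
          (if t < D x₂ z then (1 : ℝ) else 0) ≤ (if t < D x₁ z then (1 : ℝ) else 0)) ∧
      (∑ x, ∑ z, (if t < D x z then (1 : ℝ) else 0) * PXZ x z
        - ∑ x, ∑ z, (if t < D x z then (1 : ℝ) else 0) * p₀ x z ≥ ε) := by
  classical
  set w : α → β → ℝ := fun x z => PXZ x z - p₀ x z with hw
  set g : ℝ → ℝ := fun t => ∑ x, ∑ z, (if t < D x z then (1:ℝ) else 0) * w x z with hg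
  -- advantage rewritten
  have hadv' : ε ≤ ∑ x, ∑ z, D x z * w x z := by
    have : ∑ x, ∑ z, D x z * w x z
        = ∑ x, ∑ z, D x z * PXZ x z - ∑ x, ∑ z, D x z * p₀ x z := by
      rw [← Finset.sum_sub_distrib]
      refine Finset.sum_congr rfl fun x _ => ?_
      rw [← Finset.sum_sub_distrib]
      exact Finset.sum_congr rfl fun z _ => by rw [hw]; ring
    rw [this]; exact hadv
  -- integrability of g
  have hinner : ∀ x : α, IntervalIntegrable
      (fun t => ∑ z, (if t < D x z then (1:ℝ) else 0) * w x z) volume 0 1 := by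
    intro x
    have h := IntervalIntegrable.sum (μ := MeasureTheory.volume) (a := 0) (b := 1)
      (f := fun z t => (if t < D x z then (1:ℝ) else 0) * w x z)
      Finset.univ (fun z _ => (indInt19 (D x z)).mul_const _)
    have he : (∑ z : β, fun t => (if t < D x z then (1:ℝ) else 0) * w x z)
        = fun t => ∑ z, (if t < D x z then (1:ℝ) else 0) * w x z := by
      ext t; simp
    rwa [he] at h
  have hgint : IntervalIntegrable g volume 0 1 := by
    rw [hg]
    have h := IntervalIntegrable.sum (μ := MeasureTheory.volume) (a := 0) (b := 1)
      (f := fun x t => ∑ z, (if t < D x z then (1:ℝ) else 0) * w x z)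
      Finset.univ (fun x _ => hinner x)
    have he : (∑ x : α, fun t => ∑ z, (if t < D x z then (1:ℝ) else 0) * w x z)
        = fun t => ∑ x, ∑ z, (if t < D x z then (1:ℝ) else 0) * w x z := by
      ext t; simp
    rwa [he] at h
  -- integral of g
  have hgInt : ∫ t in (0:ℝ)..1, g t = ∑ x, ∑ z, D x z * w x z := by
    rw [hg]
    rw [intervalIntegral.integral_finset_sum
      (f := fun x t => ∑ z, (if t < D x z then (1:ℝ) else 0) * w x z)
      (fun x _ => hinner x)]
    refine Finset.sum_congr rfl fun x _ => ?_
    rw [intervalIntegral.integral_finset_sum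
      (f := fun z t => (if t < D x z then (1:ℝ) else 0) * w x z)
      (fun z _ => (indInt19 (D x z)).mul_const _)]
    refine Finset.sum_congr rfl fun z _ => ?_
    rw [intervalIntegral.integral_mul_const,
      indIntegral19 (D x z) (hD01 x z).1 (hD01 x z).2]
  -- candidate thresholds
  set C : Finset ℝ := insert 0 (Finset.image (fun p : α × β => D p.1 p.2) Finset.univ)
    with hC
  obtain ⟨t₀, ht₀C, ht₀max⟩ := C.exists_max_image g ⟨0, by simp [hC]⟩
  have ht₀Icc : t₀ ∈ Set.Icc (0:ℝ) 1 := by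
    rcases Finset.mem_insert.1 ht₀C with h | h
    · rw [h]; exact ⟨le_refl 0, zero_le_one⟩
    · obtain ⟨p, _, hp⟩ := Finset.mem_image.1 h
      exact hp ▸ hD01 p.1 p.2
  -- g t ≤ g t₀ for all t ∈ [0,1]
  have hbound : ∀ t ∈ Set.Icc (0:ℝ) 1, g t ≤ g t₀ := by
    intro t ht
    have hne : (C.filter (· ≤ t)).Nonempty :=
      ⟨0, Finset.mem_filter.2 ⟨Finset.mem_insert_self _ _, ht.1⟩⟩
    set c := (C.filter (· ≤ t)).max' hne with hc
    have hcmem := (C.filter (· ≤ t)).max'_mem hne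
    have hcC : c ∈ C := (Finset.mem_filter.1 hcmem).1
    have hct : c ≤ t := (Finset.mem_filter.1 hcmem).2
    have hkey : g t = g c := by
      rw [hg]
      refine Finset.sum_congr rfl fun x _ => Finset.sum_congr rfl fun z _ => ?_
      congr 1
      by_cases hD : t < D x z
      · rw [if_pos hD, if_pos (lt_of_le_of_lt hct hD)]
      · push_neg at hD
        rw [if_neg (not_lt.2 hD), if_neg]
        intro hcD
        have hmem : D x z ∈ C.filter (· ≤ t) := by
          refine Finset.mem_filter.2 ⟨?_, by simpa using hD⟩
          exact Finset.mem_insert_of_mem (Finset.mem_image.2 ⟨(x, z), Finset.mem_univ _, rfl⟩)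
        exact absurd ((C.filter (· ≤ t)).le_max' _ hmem) (not_le.2 hcD)
    rw [hkey]
    exact ht₀max c hcC
  -- conclude ε ≤ g t₀
  have hεg : ε ≤ g t₀ := by
    have h1 : ∫ t in (0:ℝ)..1, g t ≤ ∫ t in (0:ℝ)..1, g t₀ := by
      apply intervalIntegral.integral_mono_on zero_le_one hgint intervalIntegrable_const
      exact hbound
    rw [intervalIntegral.integral_const] at h1
    simp only [sub_zero, one_smul] at h1
    calc ε ≤ ∑ x, ∑ z, D x z * w x z := hadv'
    _ = ∫ t in (0:ℝ)..1, g t := hgInt.symm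
    _ ≤ g t₀ := h1
  refine ⟨t₀, ht₀Icc, ?_, ?_⟩
  · intro z hz x₁ x₂ h1 h2
    have := hcone z hz x₁ x₂ h1 h2
    split_ifs with ha hb hb <;> try norm_num
    exact absurd (lt_of_lt_of_le ha this) hb
  · have : ∑ x, ∑ z, (if t₀ < D x z then (1:ℝ) else 0) * PXZ x z
        - ∑ x, ∑ z, (if t₀ < D x z then (1:ℝ) else 0) * p₀ x z = g t₀ := by
      rw [hg, ← Finset.sum_sub_distrib]
      refine Finset.sum_congr rfl fun x _ => ?_
      rw [← Finset.sum_sub_distrib]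
      exact Finset.sum_congr rfl fun z _ => by rw [hw]; ring
    rw [this]; exact hεg


/-- If a `[0,1]`-valued `D` in the normal cone of
`𝒴 = {p ≥ 0 : ∑_x p(x,z) = P_Z(z), p(x,z) ≤ 2^{-k}P_Z(z)}` at a flat point
`p₀` distinguishes `P_{X,Z}` from `p₀` with advantage at least `ε`, then some
threshold function `D' = 1[D > t]` is also in the normal cone and has
advantage at least `ε`. -/
theorem stmt19 {α β : Type*} [Fintype α] [Fintype β] (k ε : ℝ)
    (PZ : β → ℝ) (hPZ0 : ∀ z, 0 ≤ PZ z) (hPZ1 : ∑ z, PZ z = 1)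
    (p₀ : α → β → ℝ)
    (hp₀mem : (∀ x z, 0 ≤ p₀ x z) ∧ (∀ z, ∑ x, p₀ x z = PZ z) ∧
      (∀ x z, p₀ x z ≤ (2 : ℝ) ^ (-k) * PZ z))
    (hflat : ∀ x z, p₀ x z = (2 : ℝ) ^ (-k) * PZ z ∨ p₀ x z = 0)
    (PXZ : α → β → ℝ) (hPXZ0 : ∀ x z, 0 ≤ PXZ x z)
    (hPXZ1 : ∑ x, ∑ z, PXZ x z = 1)
    (D : α → β → ℝ) (hD01 : ∀ x z, D x z ∈ Set.Icc (0 : ℝ) 1)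
    (hcone : ∀ z, 0 < PZ z → ∀ x₁ x₂,
      p₀ x₁ z = (2 : ℝ) ^ (-k) * PZ z → p₀ x₂ z = 0 → D x₂ z ≤ D x₁ z)
    (hadv : ∑ x, ∑ z, D x z * PXZ x z - ∑ x, ∑ z, D x z * p₀ x z ≥ ε) :
    ∃ t ∈ Set.Icc (0 : ℝ) 1,
      (∀ z, 0 < PZ z → ∀ x₁ x₂,
        p₀ x₁ z = (2 : ℝ) ^ (-k) * PZ z → p₀ x₂ z = 0 →
          (if t < D x₂ z then (1 : ℝ) else 0) ≤ (if t < D x₁ z then (1 : ℝ) else 0)) ∧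
      (∑ x, ∑ z, (if t < D x z then (1 : ℝ) else 0) * PXZ x z
        - ∑ x, ∑ z, (if t < D x z then (1 : ℝ) else 0) * p₀ x z ≥ ε) :=
  stmt19' k ε PZ p₀ PXZ D hD01 hcone hadv
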